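/- Let n, d ≥ 1 be integers and let J⁽¹⁾, …, J⁽ᵈ⁾ be real 2n×2n matrices. For j ∈ {1, …, 2n} define Ṽ_j f(v, z) = (∂f/∂v_j)(v, z) + (1/2) Σ_{i=1}^{d} ⟨v, J⁽ⁱ⁾ e_j⟩ (∂f/∂z_i)(v, z) for Schwartz f on ℝ^{2n} × ℝ^d, and the sub-Laplacian 𝓛 f = −Σ_{j=1}^{2n} Ṽ_j(Ṽ_j f). For a unit vector ω ∈ ℝ^d define R_ω f(v, t) = ∫_{ω^⊥} f(v, tω + z′) dσ(z′), where σ is Lebesgue measure on the hyperplane ω^⊥ = {z ∈ ℝ^d : ⟨z, ω⟩ = 0}; and on functions g(v, t) on ℝ^{2n} × ℝ define V_j^ω g = ∂g/∂v_j + (1/2)(Σ_{i=1}^{d} ω_i ⟨v, J⁽ⁱ⁾ e_j⟩) ∂g/∂t and 𝓛^ω g = −Σ_{j=1}^{2n} V_j^ω(V_j^ω g). Then for every Schwartz f, R_ω(𝓛 f) = 𝓛^ω (R_ω f). -/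

import Mathlib

open MeasureTheory Matrix

/-- The left-invariant vector field `Ṽ_j` on `ℝ^{2n} × ℝ^d`:
`Ṽ_j f(v,z) = ∂f/∂v_j + (1/2) Σ_i ⟨v, J⁽ⁱ⁾e_j⟩ ∂f/∂z_i`. -/
noncomputable def Vtilde (n d : ℕ) (J : Fin d → Matrix (Fin (2 * n)) (Fin (2 * n)) ℝ)
    (j : Fin (2 * n)) (f : (Fin (2 * n) → ℝ) × EuclideanSpace ℝ (Fin d) → ℝ)
    (x : (Fin (2 * n) → ℝ) × EuclideanSpace ℝ (Fin d)) : ℝ :=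
  fderiv ℝ f x (Pi.single j 1, 0) +
    (1 / 2) * ∑ i : Fin d,
      (x.1 ⬝ᵥ (J i *ᵥ Pi.single j 1)) * fderiv ℝ f x (0, EuclideanSpace.single i 1)

/-- The sub-Laplacian `𝓛 = −Σ_j Ṽ_j²`. -/
noncomputable def subLaplacian (n d : ℕ)
    (J : Fin d → Matrix (Fin (2 * n)) (Fin (2 * n)) ℝ)
    (f : (Fin (2 * n) → ℝ) × EuclideanSpace ℝ (Fin d) → ℝ)
    (x : (Fin (2 * n) → ℝ) × EuclideanSpace ℝ (Fin d)) : ℝ :=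
  -∑ j : Fin (2 * n), Vtilde n d J j (Vtilde n d J j f) x

/-- The partial Radon transform in the central variable:
`R_ω f(v, t) = ∫_{ω^⊥} f(v, tω + z′) dσ(z′)` with `σ` Lebesgue measure on the
hyperplane `ω^⊥`. -/
noncomputable def Radon (n d : ℕ) (ω : EuclideanSpace ℝ (Fin d))
    (f : (Fin (2 * n) → ℝ) × EuclideanSpace ℝ (Fin d) → ℝ)
    (x : (Fin (2 * n) → ℝ) × ℝ) : ℝ :=
  ∫ z' : (ℝ ∙ ω)ᗮ, f (x.1, x.2 • ω + (z' : EuclideanSpace ℝ (Fin d)))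

/-- The vector field `V_j^ω = ∂/∂v_j + (1/2)(Σ_i ω_i ⟨v, J⁽ⁱ⁾e_j⟩) ∂/∂t`
on functions of `(v, t) ∈ ℝ^{2n} × ℝ`. -/
noncomputable def Vomega (n d : ℕ) (J : Fin d → Matrix (Fin (2 * n)) (Fin (2 * n)) ℝ)
    (ω : EuclideanSpace ℝ (Fin d)) (j : Fin (2 * n))
    (g : (Fin (2 * n) → ℝ) × ℝ → ℝ) (x : (Fin (2 * n) → ℝ) × ℝ) : ℝ :=
  fderiv ℝ g x (Pi.single j 1, 0) +
    (1 / 2) * (∑ i : Fin d, ω i * (x.1 ⬝ᵥ (J i *ᵥ Pi.single j 1))) *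
      fderiv ℝ g x (0, 1)

/-- The sub-Laplacian `𝓛^ω = −Σ_j (V_j^ω)²` on the quotient group `G_ω ≅ ℍⁿ`. -/
noncomputable def subLaplacianOmega (n d : ℕ)
    (J : Fin d → Matrix (Fin (2 * n)) (Fin (2 * n)) ℝ)
    (ω : EuclideanSpace ℝ (Fin d)) (g : (Fin (2 * n) → ℝ) × ℝ → ℝ)
    (x : (Fin (2 * n) → ℝ) × ℝ) : ℝ :=
  -∑ j : Fin (2 * n), Vomega n d J ω j (Vomega n d J ω j g) x


section Auxiliary
open SchwartzMap
set_option linter.unusedSectionVars false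
set_option synthInstance.maxHeartbeats 1000000
set_option maxHeartbeats 1000000

variable {W : Type*} [NormedAddCommGroup W] [InnerProductSpace ℝ W]
  [FiniteDimensional ℝ W] [MeasurableSpace W] [BorelSpace W]
variable {G : Type*} [NormedAddCommGroup G] [NormedSpace ℝ G]
variable {F : Type*} [NormedAddCommGroup F] [NormedSpace ℝ F]
variable {P : Type*} [NormedAddCommGroup P] [NormedSpace ℝ P]



variable {W : Type*} [NormedAddCommGroup W] [InnerProductSpace ℝ W]
  [FiniteDimensional ℝ W] [MeasurableSpace W] [BorelSpace W]
variable {G : Type*} [NormedAddCommGroup G] [NormedSpace ℝ G]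
variable {F : Type*} [NormedAddCommGroup F] [NormedSpace ℝ F]

lemma affine_temperate (c : G) (ι : W →L[ℝ] G) :
    Function.HasTemperateGrowth (fun z : W => c + ι z) := by
  apply Function.HasTemperateGrowth.of_fderiv (k := 1) (C := ‖c‖ + ‖ι‖)
  · have h : (fderiv ℝ fun z : W => c + ι z) = fun _ => ι := by
      ext1 z
      rw [fderiv_const_add, ι.fderiv]
    rw [h]
    exact .const _
  · exact (ι.differentiable).const_add c
  · intro x
    have := ι.le_opNorm x
    have h1 : ‖c + ι x‖ ≤ ‖c‖ + ‖ι‖ * ‖x‖ := (norm_add_le _ _).trans (by linarith)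
    have h2 : (0:ℝ) ≤ ‖ι‖ := norm_nonneg _
    have h3 : (0:ℝ) ≤ ‖c‖ := norm_nonneg _
    have h4 : (0:ℝ) ≤ ‖x‖ := norm_nonneg _
    calc ‖c + ι x‖ ≤ ‖c‖ + ‖ι‖ * ‖x‖ := h1
      _ ≤ (‖c‖ + ‖ι‖) * (1 + ‖x‖) ^ 1 := by nlinarith

/-- Composition of a Schwartz function with an affine isometric embedding. -/
noncomputable def sliceS (c : G) (ι : W →ₗᵢ[ℝ] G) (g : 𝓢(G, F)) : 𝓢(W, F) :=
  SchwartzMap.compCLM (𝕜 := ℝ) (affine_temperate c ι.toContinuousLinearMap)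
    ⟨1, ‖c‖ + 1, fun z => by
      have h0 : ‖z‖ = ‖ι z‖ := (ι.norm_map z).symm
      have h1 : ‖ι z‖ ≤ ‖c + ι z‖ + ‖c‖ := by
        have := norm_add_le (c + ι z) (-c)
        simpa [add_assoc] using this
      have h2 : (0:ℝ) ≤ ‖c + ι z‖ := norm_nonneg _
      have h3 : (0:ℝ) ≤ ‖c‖ := norm_nonneg _
      calc ‖z‖ = ‖ι z‖ := h0
        _ ≤ ‖c + ι z‖ + ‖c‖ := h1
        _ ≤ (‖c‖ + 1) * (1 + ‖c + ι.toContinuousLinearMap z‖) ^ 1 := by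
            simp only [LinearIsometry.coe_toContinuousLinearMap]; nlinarith⟩ g

lemma sliceS_apply (c : G) (ι : W →ₗᵢ[ℝ] G) (g : 𝓢(G, F)) (z : W) :
    sliceS c ι g z = g (c + ι z) := rfl

lemma sliceS_integrable (c : G) (ι : W →ₗᵢ[ℝ] G) (g : 𝓢(G, F)) :
    Integrable (fun z : W => g (c + ι z)) := by
  have : SecondCountableTopology W := by infer_instance
  exact (sliceS c ι g).integrable

lemma schwartz_decay_bound (g : 𝓢(G, F)) (k : ℕ) :
    ∃ C : ℝ, 0 ≤ C ∧ ∀ x : G, (1 + ‖x‖) ^ k * ‖g x‖ ≤ C := by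
  refine ⟨2 ^ k * (Finset.Iic ((k, 0) : ℕ × ℕ)).sup
      (fun m => SchwartzMap.seminorm ℝ m.1 m.2) g, by positivity, fun x => ?_⟩
  have := one_add_le_sup_seminorm_apply (𝕜 := ℝ) (m := ((k, 0) : ℕ × ℕ))
    le_rfl le_rfl g x
  simpa [norm_iteratedFDeriv_zero] using this



lemma hasFDerivAt_integral_slice (g : 𝓢(G, ℝ)) (A : P →L[ℝ] G) (ι : W →ₗᵢ[ℝ] G) (x₀ : P) :
    HasFDerivAt (fun x => ∫ z : W, g (A x + ι z))
      (∫ z : W, (fderiv ℝ g (A x₀ + ι z)).comp A) x₀ := by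
  haveI hsc : SecondCountableTopology W := inferInstance
  set k : ℕ := Module.finrank ℝ W + 1 with hk
  obtain ⟨C, hC0, hC⟩ := schwartz_decay_bound (SchwartzMap.fderivCLM ℝ G ℝ g) k
  set M : ℝ := ‖A‖ * (‖x₀‖ + 1) with hM
  have hM0 : 0 ≤ M := by positivity
  -- key pointwise inequality
  have hkey : ∀ x ∈ Metric.ball x₀ 1, ∀ z : W,
      (1 + ‖z‖) ≤ (1 + M) * (1 + ‖A x + ι z‖) := by
    intro x hx z
    have hxn : ‖x‖ ≤ ‖x₀‖ + 1 := by
      have hb := mem_ball_iff_norm.mp hx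
      have h2 : ‖x‖ ≤ ‖x - x₀‖ + ‖x₀‖ := by simpa using norm_add_le (x - x₀) x₀
      linarith
    have h1 : ‖z‖ = ‖ι z‖ := (ι.norm_map z).symm
    have h2 : ‖ι z‖ ≤ ‖A x + ι z‖ + ‖A x‖ := by
      have := norm_add_le (A x + ι z) (-(A x))
      simpa [add_comm, add_assoc, add_left_comm] using this
    have h3 : ‖A x‖ ≤ ‖A‖ * ‖x‖ := A.le_opNorm x
    have h4 : ‖A‖ * ‖x‖ ≤ M := by
      rw [hM]; exact mul_le_mul_of_nonneg_left hxn (norm_nonneg _)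
    have h5 : (0:ℝ) ≤ ‖A x + ι z‖ := norm_nonneg _
    nlinarith
  have hbound_int : Integrable (fun z : W => ‖A‖ * (C * (1 + M) ^ k) * ((1 + ‖z‖) ^ k)⁻¹) := by
    apply Integrable.const_mul
    have h := integrable_one_add_norm (μ := (volume : Measure W)) (r := (k : ℝ))
      (by rw [hk]; push_cast; linarith)
    refine h.congr (Filter.Eventually.of_forall fun z => ?_)
    show ((1:ℝ) + ‖z‖) ^ (-(k:ℝ)) = ((1 + ‖z‖) ^ k)⁻¹
    rw [Real.rpow_neg (by positivity), Real.rpow_natCast]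
  have main := hasFDerivAt_integral_of_dominated_of_fderiv_le
    (F := fun x (z : W) => g (A x + ι z))
    (F' := fun x (z : W) => (fderiv ℝ g (A x + ι z)).comp A)
    (bound := fun z : W => ‖A‖ * (C * (1 + M) ^ k) * ((1 + ‖z‖) ^ k)⁻¹)
    (x₀ := x₀) (s := Metric.ball x₀ 1) (Metric.ball_mem_nhds x₀ one_pos)
    (Filter.Eventually.of_forall fun x =>
      (g.continuous.comp (continuous_const.add ι.continuous)).aestronglyMeasurable)
    (sliceS_integrable (A x₀) ι g)
    ((Continuous.clm_comp
      (((g.smooth ⊤).continuous_fderiv (by simp)).comp (continuous_const.add ι.continuous))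
      continuous_const).aestronglyMeasurable)
    (Filter.Eventually.of_forall fun z => fun x hx => ?_)
    hbound_int
    (Filter.Eventually.of_forall fun z => fun x _ => ?_)
  · exact main
  · -- norm bound
    have h1 : ‖(fderiv ℝ g (A x + ι z)).comp A‖ ≤ ‖fderiv ℝ g (A x + ι z)‖ * ‖A‖ :=
      ContinuousLinearMap.opNorm_comp_le _ _
    have h2 : (1 + ‖A x + ι z‖) ^ k * ‖fderiv ℝ g (A x + ι z)‖ ≤ C := by
      have := hC (A x + ι z)
      simpa [SchwartzMap.fderivCLM_apply] using this
    have h3 := hkey x hx z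
    have h4 : (1 + ‖z‖) ^ k ≤ ((1 + M) * (1 + ‖A x + ι z‖)) ^ k :=
      pow_le_pow_left₀ (by positivity) h3 k
    rw [mul_pow] at h4
    have h5 : (0:ℝ) < (1 + ‖z‖) ^ k := by positivity
    have h6 : (0:ℝ) ≤ ‖fderiv ℝ g (A x + ι z)‖ := norm_nonneg _
    have h7 : (0:ℝ) < (1 + ‖A x + ι z‖) ^ k := by positivity
    show ‖(fderiv ℝ (⇑g) (A x + ι z)).comp A‖ ≤ ‖A‖ * (C * (1 + M) ^ k) * ((1 + ‖z‖) ^ k)⁻¹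
    rw [← div_eq_mul_inv, le_div_iff₀ h5]
    calc ‖(fderiv ℝ (⇑g) (A x + ι z)).comp A‖ * (1 + ‖z‖) ^ k
        ≤ (‖fderiv ℝ (⇑g) (A x + ι z)‖ * ‖A‖) * ((1 + M) ^ k * (1 + ‖A x + ι z‖) ^ k) :=
          mul_le_mul h1 h4 h5.le (by positivity)
      _ = (‖A‖ * (1 + M) ^ k) * ((1 + ‖A x + ι z‖) ^ k * ‖fderiv ℝ (⇑g) (A x + ι z)‖) := by ring
      _ ≤ (‖A‖ * (1 + M) ^ k) * C := mul_le_mul_of_nonneg_left h2 (by positivity)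
      _ = ‖A‖ * (C * (1 + M) ^ k) := by ring
  · -- differentiability
    have h1 : HasFDerivAt (fun x : P => A x + ι z) A x := A.hasFDerivAt.add_const (ι z)
    have h2 : HasFDerivAt (⇑g) (fderiv ℝ g (A x + ι z)) (A x + ι z) :=
      g.differentiableAt.hasFDerivAt
    exact h2.comp x h1

lemma integrable_fderiv_slice_comp (g : 𝓢(G, ℝ)) (A : P →L[ℝ] G) (ι : W →ₗᵢ[ℝ] G) (c : G) :
    Integrable (fun z : W => (fderiv ℝ g (c + ι z)).comp A) := by
  haveI : SecondCountableTopology W := inferInstance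
  have h1 : Integrable (fun z : W => (SchwartzMap.fderivCLM ℝ G ℝ g) (c + ι z)) :=
    sliceS_integrable c ι (SchwartzMap.fderivCLM ℝ G ℝ g)
  have h2 := (((ContinuousLinearMap.compL ℝ P G ℝ).flip A)).integrable_comp h1
  exact h2.congr (Filter.Eventually.of_forall fun z => rfl)

lemma fderiv_integral_slice (g : 𝓢(G, ℝ)) (A : P →L[ℝ] G) (ι : W →ₗᵢ[ℝ] G) (x₀ : P) (v : P) :
    fderiv ℝ (fun x => ∫ z : W, g (A x + ι z)) x₀ v
      = ∫ z : W, fderiv ℝ g (A x₀ + ι z) (A v) := by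
  rw [(hasFDerivAt_integral_slice g A ι x₀).fderiv]
  rw [ContinuousLinearMap.integral_apply (integrable_fderiv_slice_comp g A ι (A x₀))]
  rfl

lemma integral_fderiv_schwartz_eq_zero (h : 𝓢(W, ℝ)) (u : W) :
    ∫ z : W, fderiv ℝ h z u = 0 := by
  haveI : SecondCountableTopology W := inferInstance
  set T : ℝ →L[ℝ] W := (ContinuousLinearMap.id ℝ ℝ).smulRight u with hT
  have hTapp : ∀ s : ℝ, T s = s • u := fun s => rfl
  have hd := hasFDerivAt_integral_slice h T (LinearIsometry.id) 0
  simp only [LinearIsometry.id_apply] at hd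
  have hconst : (fun s : ℝ => ∫ z : W, h (T s + z)) = fun _ : ℝ => ∫ z : W, h z := by
    funext s
    exact integral_add_left_eq_self (μ := (volume : Measure W)) (⇑h) (T s)
  rw [hconst] at hd
  have h0 : (∫ z : W, (fderiv ℝ h (T 0 + z)).comp T) = 0 :=
    hd.unique (hasFDerivAt_const _ _)
  have h1 := congrArg (fun φ : ℝ →L[ℝ] ℝ => φ 1) h0
  simp only [ContinuousLinearMap.zero_apply] at h1
  rw [ContinuousLinearMap.integral_apply
    (integrable_fderiv_slice_comp h T LinearIsometry.id (T 0) |>.congr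
      (Filter.Eventually.of_forall fun z => by simp [LinearIsometry.id_apply]))] at h1
  simp only [map_zero, zero_add, ContinuousLinearMap.comp_apply, hTapp, one_smul, zero_smul] at h1
  exact h1


end Auxiliary

section Application
open SchwartzMap RealInnerProductSpace
set_option linter.unusedSectionVars false
set_option synthInstance.maxHeartbeats 1000000
set_option maxHeartbeats 1000000

variable (n d : ℕ) (ω : EuclideanSpace ℝ (Fin d))

/-- The isometric inclusion of the hyperplane `ω^⊥` into `ℝ^{2n} × ℝ^d` (as `z' ↦ (0, z')`). -/
noncomputable def iotaW : ((ℝ ∙ ω)ᗮ : Submodule ℝ (EuclideanSpace ℝ (Fin d))) →ₗᵢ[ℝ]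
    ((Fin (2 * n) → ℝ) × EuclideanSpace ℝ (Fin d)) where
  toLinearMap := (LinearMap.inr ℝ (Fin (2 * n) → ℝ) (EuclideanSpace ℝ (Fin d))).comp
    ((ℝ ∙ ω)ᗮ).subtype
  norm_map' := fun z => by
    simp only [LinearMap.coe_comp, Function.comp_apply, Submodule.coe_subtype,
      LinearMap.coe_inr, Prod.norm_def, norm_zero]
    rw [max_eq_right (norm_nonneg _)]
    rfl

lemma iotaW_apply (z : ((ℝ ∙ ω)ᗮ : Submodule ℝ (EuclideanSpace ℝ (Fin d)))) :
    iotaW n d ω z = ((0 : Fin (2 * n) → ℝ), (z : EuclideanSpace ℝ (Fin d))) := rfl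

/-- The linear map `(v, t) ↦ (v, tω)`. -/
noncomputable def Lom : ((Fin (2 * n) → ℝ) × ℝ) →L[ℝ]
    ((Fin (2 * n) → ℝ) × EuclideanSpace ℝ (Fin d)) :=
  (ContinuousLinearMap.fst ℝ (Fin (2 * n) → ℝ) ℝ).prod
    ((ContinuousLinearMap.snd ℝ (Fin (2 * n) → ℝ) ℝ).smulRight ω)

lemma Lom_apply (x : (Fin (2 * n) → ℝ) × ℝ) : Lom n d ω x = (x.1, x.2 • ω) := rfl

lemma pt_eq (v : Fin (2 * n) → ℝ) (c : EuclideanSpace ℝ (Fin d)) (z' : (ℝ ∙ ω)ᗮ) :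
    ((v, c) : (Fin (2 * n) → ℝ) × EuclideanSpace ℝ (Fin d)) + iotaW n d ω z'
      = (v, c + (z' : EuclideanSpace ℝ (Fin d))) := by
  refine Prod.ext ?_ ?_ <;> simp [iotaW_apply]

lemma radon_eq (f : 𝓢((Fin (2 * n) → ℝ) × EuclideanSpace ℝ (Fin d), ℝ)) :
    Radon n d ω ⇑f = fun x => ∫ z' : (ℝ ∙ ω)ᗮ, f (Lom n d ω x + iotaW n d ω z') := by
  funext x
  simp only [Radon]
  congr 1
  funext z'
  rw [show (Lom n d ω x + iotaW n d ω z') = (x.1, x.2 • ω + (z' : EuclideanSpace ℝ (Fin d)))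
    from pt_eq n d ω x.1 (x.2 • ω) z']

lemma integrable_slice_pair {F : Type*} [NormedAddCommGroup F] [NormedSpace ℝ F]
    (g : 𝓢((Fin (2 * n) → ℝ) × EuclideanSpace ℝ (Fin d), F))
    (v : Fin (2 * n) → ℝ) (c : EuclideanSpace ℝ (Fin d)) :
    Integrable (fun z' : (ℝ ∙ ω)ᗮ => g (v, c + (z' : EuclideanSpace ℝ (Fin d)))) := by
  have h := sliceS_integrable ((v, c) : (Fin (2 * n) → ℝ) × EuclideanSpace ℝ (Fin d))
    (iotaW n d ω) g
  exact h.congr (Filter.Eventually.of_forall fun z' => congrArg g (pt_eq n d ω v c z'))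

lemma fderiv_radon_apply (f : 𝓢((Fin (2 * n) → ℝ) × EuclideanSpace ℝ (Fin d), ℝ))
    (x v : (Fin (2 * n) → ℝ) × ℝ) :
    fderiv ℝ (Radon n d ω ⇑f) x v
      = ∫ z' : (ℝ ∙ ω)ᗮ,
          fderiv ℝ ⇑f (x.1, x.2 • ω + (z' : EuclideanSpace ℝ (Fin d))) (v.1, v.2 • ω) := by
  rw [radon_eq, fderiv_integral_slice]
  congr 1
  funext z'
  rw [show (Lom n d ω x + iotaW n d ω z') = (x.1, x.2 • ω + (z' : EuclideanSpace ℝ (Fin d)))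
    from pt_eq n d ω x.1 (x.2 • ω) z']
  rfl

lemma integral_fderiv_perp (f : 𝓢((Fin (2 * n) → ℝ) × EuclideanSpace ℝ (Fin d), ℝ))
    (v : Fin (2 * n) → ℝ) (c : EuclideanSpace ℝ (Fin d))
    (u : EuclideanSpace ℝ (Fin d)) (hu : u ∈ (ℝ ∙ ω)ᗮ) :
    ∫ z' : (ℝ ∙ ω)ᗮ,
      fderiv ℝ ⇑f (v, c + (z' : EuclideanSpace ℝ (Fin d))) ((0 : Fin (2 * n) → ℝ), u) = 0 := by
  set h : 𝓢(((ℝ ∙ ω)ᗮ : Submodule ℝ (EuclideanSpace ℝ (Fin d))), ℝ) :=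
    sliceS ((v, c) : (Fin (2 * n) → ℝ) × EuclideanSpace ℝ (Fin d)) (iotaW n d ω) f with hh
  have hfd : ∀ z' : (ℝ ∙ ω)ᗮ, fderiv ℝ (⇑h) z'
      = (fderiv ℝ ⇑f (v, c + (z' : EuclideanSpace ℝ (Fin d)))).comp
          (iotaW n d ω).toContinuousLinearMap := by
    intro z'
    have h1 : HasFDerivAt (fun z' : (ℝ ∙ ω)ᗮ =>
        ((v, c) : (Fin (2 * n) → ℝ) × EuclideanSpace ℝ (Fin d)) + iotaW n d ω z')
        (iotaW n d ω).toContinuousLinearMap z' :=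
      ((iotaW n d ω).toContinuousLinearMap.hasFDerivAt).const_add _
    have h2 : HasFDerivAt ⇑f
        (fderiv ℝ ⇑f (((v, c) : (Fin (2 * n) → ℝ) × EuclideanSpace ℝ (Fin d)) + iotaW n d ω z'))
        (((v, c) : (Fin (2 * n) → ℝ) × EuclideanSpace ℝ (Fin d)) + iotaW n d ω z') :=
      f.differentiableAt.hasFDerivAt
    have h3 := h2.comp z' h1
    rw [pt_eq] at h3
    exact h3.fderiv
  have h0 := integral_fderiv_schwartz_eq_zero h ⟨u, hu⟩
  simp only [hfd, ContinuousLinearMap.comp_apply] at h0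
  convert h0 using 2
  exact funext fun z' => rfl

lemma schwartz_finset_sum_apply {E F : Type*} [NormedAddCommGroup E] [NormedSpace ℝ E]
    [NormedAddCommGroup F] [NormedSpace ℝ F] {ι : Type*} (s : Finset ι)
    (g : ι → 𝓢(E, F)) (x : E) :
    (∑ i ∈ s, g i) x = ∑ i ∈ s, g i x :=
  map_sum (AddMonoidHom.mk' (fun f : 𝓢(E, F) => f x)
    (fun _ _ => SchwartzMap.add_apply _ _ _)) g s

/-- The coefficient `x ↦ ⟨v, J⁽ⁱ⁾ e_j⟩` as a continuous linear map. -/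
noncomputable def coefCLM (J : Fin d → Matrix (Fin (2 * n)) (Fin (2 * n)) ℝ)
    (i : Fin d) (j : Fin (2 * n)) :
    ((Fin (2 * n) → ℝ) × EuclideanSpace ℝ (Fin d)) →L[ℝ] ℝ :=
  ∑ k : Fin (2 * n), (J i *ᵥ Pi.single j 1) k •
    ((ContinuousLinearMap.proj k).comp
      (ContinuousLinearMap.fst ℝ (Fin (2 * n) → ℝ) (EuclideanSpace ℝ (Fin d))))

lemma coefCLM_apply (J : Fin d → Matrix (Fin (2 * n)) (Fin (2 * n)) ℝ)
    (i : Fin d) (j : Fin (2 * n)) (x : (Fin (2 * n) → ℝ) × EuclideanSpace ℝ (Fin d)) :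
    coefCLM n d J i j x = x.1 ⬝ᵥ (J i *ᵥ Pi.single j 1) := by
  simp only [coefCLM, ContinuousLinearMap.sum_apply, ContinuousLinearMap.smul_apply,
    ContinuousLinearMap.comp_apply, ContinuousLinearMap.proj_apply,
    ContinuousLinearMap.coe_fst', dotProduct, smul_eq_mul]
  exact Finset.sum_congr rfl fun k _ => mul_comm _ _

/-- `Ṽ_j f` as a Schwartz function. -/
noncomputable def VtS (J : Fin d → Matrix (Fin (2 * n)) (Fin (2 * n)) ℝ) (j : Fin (2 * n))
    (f : 𝓢((Fin (2 * n) → ℝ) × EuclideanSpace ℝ (Fin d), ℝ)) :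
    𝓢((Fin (2 * n) → ℝ) × EuclideanSpace ℝ (Fin d), ℝ) :=
  LineDeriv.lineDerivOpCLM ℝ 𝓢((Fin (2 * n) → ℝ) × EuclideanSpace ℝ (Fin d), ℝ) (V := (Fin (2 * n) → ℝ) × EuclideanSpace ℝ (Fin d)) ((Pi.single j 1 : Fin (2 * n) → ℝ), (0 : EuclideanSpace ℝ (Fin d))) f
  + (2⁻¹ : ℝ) • ∑ i : Fin d,
      bilinLeftCLM (ContinuousLinearMap.mul ℝ ℝ) ((coefCLM n d J i j).hasTemperateGrowth)
        (LineDeriv.lineDerivOpCLM ℝ 𝓢((Fin (2 * n) → ℝ) × EuclideanSpace ℝ (Fin d), ℝ) (V := (Fin (2 * n) → ℝ) × EuclideanSpace ℝ (Fin d)) (((0 : Fin (2 * n) → ℝ), EuclideanSpace.single i 1)) f)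

lemma VtS_apply (J : Fin d → Matrix (Fin (2 * n)) (Fin (2 * n)) ℝ) (j : Fin (2 * n))
    (f : 𝓢((Fin (2 * n) → ℝ) × EuclideanSpace ℝ (Fin d), ℝ))
    (x : (Fin (2 * n) → ℝ) × EuclideanSpace ℝ (Fin d)) :
    VtS n d J j f x = Vtilde n d J j ⇑f x := by
  have hb : ∀ i : Fin d,
      (bilinLeftCLM (ContinuousLinearMap.mul ℝ ℝ) ((coefCLM n d J i j).hasTemperateGrowth)
        (LineDeriv.lineDerivOpCLM ℝ 𝓢((Fin (2 * n) → ℝ) × EuclideanSpace ℝ (Fin d), ℝ) (V := (Fin (2 * n) → ℝ) × EuclideanSpace ℝ (Fin d)) (((0 : Fin (2 * n) → ℝ), EuclideanSpace.single i 1)) f)) x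
      = fderiv ℝ ⇑f x ((0 : Fin (2 * n) → ℝ), EuclideanSpace.single i 1) * coefCLM n d J i j x :=
    fun i => rfl
  simp only [VtS, SchwartzMap.add_apply, SchwartzMap.smul_apply, schwartz_finset_sum_apply,
    LineDeriv.lineDerivOpCLM_apply, SchwartzMap.lineDerivOp_apply_eq_fderiv, hb, coefCLM_apply, smul_eq_mul, Vtilde]
  rw [one_div]
  congr 2
  exact Finset.sum_congr rfl fun i _ => (hb i).trans (by rw [coefCLM_apply, mul_comm])

lemma radon_vtilde (hω : ‖ω‖ = 1) (J : Fin d → Matrix (Fin (2 * n)) (Fin (2 * n)) ℝ)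
    (f : 𝓢((Fin (2 * n) → ℝ) × EuclideanSpace ℝ (Fin d), ℝ)) (j : Fin (2 * n)) :
    Radon n d ω (Vtilde n d J j ⇑f) = Vomega n d J ω j (Radon n d ω ⇑f) := by
  funext x
  have hint : ∀ m : (Fin (2 * n) → ℝ) × EuclideanSpace ℝ (Fin d),
      Integrable (fun z' : (ℝ ∙ ω)ᗮ =>
        fderiv ℝ ⇑f (x.1, x.2 • ω + (z' : EuclideanSpace ℝ (Fin d))) m) := by
    intro m
    exact integrable_slice_pair n d ω (LineDeriv.lineDerivOpCLM ℝ 𝓢((Fin (2 * n) → ℝ) × EuclideanSpace ℝ (Fin d), ℝ) (V := (Fin (2 * n) → ℝ) × EuclideanSpace ℝ (Fin d)) m f) x.1 (x.2 • ω)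
  have hIsum : Integrable (fun z' : (ℝ ∙ ω)ᗮ => 1 / 2 * ∑ i : Fin d,
      (x.1 ⬝ᵥ (J i *ᵥ Pi.single j 1)) *
        fderiv ℝ ⇑f (x.1, x.2 • ω + (z' : EuclideanSpace ℝ (Fin d)))
          ((0 : Fin (2 * n) → ℝ), EuclideanSpace.single i 1)) :=
    (integrable_finset_sum _ (fun i _ => (hint _).const_mul _)).const_mul _
  have hper : ∀ i : Fin d,
      (∫ z' : (ℝ ∙ ω)ᗮ, fderiv ℝ ⇑f (x.1, x.2 • ω + (z' : EuclideanSpace ℝ (Fin d)))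
          ((0 : Fin (2 * n) → ℝ), EuclideanSpace.single i 1))
      = ω i * ∫ z' : (ℝ ∙ ω)ᗮ,
          fderiv ℝ ⇑f (x.1, x.2 • ω + (z' : EuclideanSpace ℝ (Fin d)))
            ((0 : Fin (2 * n) → ℝ), ω) := by
    intro i
    have hdir : (((0 : Fin (2 * n) → ℝ), EuclideanSpace.single i 1) :
          (Fin (2 * n) → ℝ) × EuclideanSpace ℝ (Fin d))
        = ω i • (((0 : Fin (2 * n) → ℝ), ω) :
            (Fin (2 * n) → ℝ) × EuclideanSpace ℝ (Fin d)) +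
          (((0 : Fin (2 * n) → ℝ), EuclideanSpace.single i 1 - ω i • ω) :
            (Fin (2 * n) → ℝ) × EuclideanSpace ℝ (Fin d)) := by
      refine Prod.ext ?_ ?_ <;> simp
    have hu : EuclideanSpace.single i (1 : ℝ) - ω i • ω ∈ (ℝ ∙ ω)ᗮ := by
      have h1 : (inner ℝ ω (EuclideanSpace.single i (1 : ℝ)) : ℝ) = ω i := by
        rw [EuclideanSpace.inner_single_right]; simp
      rw [Submodule.mem_orthogonal_singleton_iff_inner_right, inner_sub_right, h1,
        real_inner_smul_right, real_inner_self_eq_norm_mul_norm, hω]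
      ring
    calc (∫ z' : (ℝ ∙ ω)ᗮ, fderiv ℝ ⇑f (x.1, x.2 • ω + (z' : EuclideanSpace ℝ (Fin d)))
            ((0 : Fin (2 * n) → ℝ), EuclideanSpace.single i 1))
        = ∫ z' : (ℝ ∙ ω)ᗮ,
            (ω i * fderiv ℝ ⇑f (x.1, x.2 • ω + (z' : EuclideanSpace ℝ (Fin d)))
              ((0 : Fin (2 * n) → ℝ), ω)
            + fderiv ℝ ⇑f (x.1, x.2 • ω + (z' : EuclideanSpace ℝ (Fin d)))
              ((0 : Fin (2 * n) → ℝ), EuclideanSpace.single i 1 - ω i • ω)) := by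
          congr 1
          funext z'
          rw [hdir, map_add, _root_.map_smul, smul_eq_mul]
      _ = ω i * (∫ z' : (ℝ ∙ ω)ᗮ,
            fderiv ℝ ⇑f (x.1, x.2 • ω + (z' : EuclideanSpace ℝ (Fin d)))
              ((0 : Fin (2 * n) → ℝ), ω))
          + ∫ z' : (ℝ ∙ ω)ᗮ,
              fderiv ℝ ⇑f (x.1, x.2 • ω + (z' : EuclideanSpace ℝ (Fin d)))
                ((0 : Fin (2 * n) → ℝ), EuclideanSpace.single i 1 - ω i • ω) := by
          rw [integral_add ((hint _).const_mul _) (hint _), integral_const_mul]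
      _ = ω i * ∫ z' : (ℝ ∙ ω)ᗮ,
            fderiv ℝ ⇑f (x.1, x.2 • ω + (z' : EuclideanSpace ℝ (Fin d)))
              ((0 : Fin (2 * n) → ℝ), ω) := by
          rw [integral_fderiv_perp n d ω f x.1 (x.2 • ω) _ hu, add_zero]
  have hradon : Radon n d ω (Vtilde n d J j ⇑f) x
      = (∫ z' : (ℝ ∙ ω)ᗮ, fderiv ℝ ⇑f (x.1, x.2 • ω + (z' : EuclideanSpace ℝ (Fin d)))
          ((Pi.single j 1 : Fin (2 * n) → ℝ), (0 : EuclideanSpace ℝ (Fin d))))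
        + 1 / 2 * ∑ i : Fin d, (x.1 ⬝ᵥ (J i *ᵥ Pi.single j 1)) *
            (ω i * ∫ z' : (ℝ ∙ ω)ᗮ,
              fderiv ℝ ⇑f (x.1, x.2 • ω + (z' : EuclideanSpace ℝ (Fin d)))
                ((0 : Fin (2 * n) → ℝ), ω)) := by
    simp only [Radon, Vtilde]
    rw [integral_add (hint _) hIsum, integral_const_mul,
      integral_finset_sum _ (fun i _ => (hint _).const_mul _)]
    simp only [integral_const_mul, hper]
  have homega : Vomega n d J ω j (Radon n d ω ⇑f) x
      = (∫ z' : (ℝ ∙ ω)ᗮ, fderiv ℝ ⇑f (x.1, x.2 • ω + (z' : EuclideanSpace ℝ (Fin d)))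
          ((Pi.single j 1 : Fin (2 * n) → ℝ), (0 : EuclideanSpace ℝ (Fin d))))
        + 1 / 2 * (∑ i : Fin d, ω i * (x.1 ⬝ᵥ (J i *ᵥ Pi.single j 1))) *
            (∫ z' : (ℝ ∙ ω)ᗮ,
              fderiv ℝ ⇑f (x.1, x.2 • ω + (z' : EuclideanSpace ℝ (Fin d)))
                ((0 : Fin (2 * n) → ℝ), ω)) := by
    simp only [Vomega]
    rw [fderiv_radon_apply, fderiv_radon_apply]
    simp only [zero_smul, one_smul]
  rw [hradon, homega, mul_assoc, Finset.sum_mul]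
  congr 2
  · exact Finset.sum_congr rfl fun i _ => by ring

end Application

/-- Lemma 2.6 (1): the partial Radon transform intertwines the sub-Laplacian `𝓛` on `G`
with the sub-Laplacian `𝓛^ω` on `G_ω`: `R_ω(𝓛 f) = 𝓛^ω(R_ω f)`. -/
theorem radon_intertwines_subLaplacian (n d : ℕ) (hn : 1 ≤ n) (hd : 1 ≤ d)
    (J : Fin d → Matrix (Fin (2 * n)) (Fin (2 * n)) ℝ)
    (ω : EuclideanSpace ℝ (Fin d)) (hω : ‖ω‖ = 1)
    (f : SchwartzMap ((Fin (2 * n) → ℝ) × EuclideanSpace ℝ (Fin d)) ℝ) :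
    Radon n d ω (subLaplacian n d J ⇑f) =
      subLaplacianOmega n d J ω (Radon n d ω ⇑f) := by
  have hVt : ∀ (g : SchwartzMap ((Fin (2 * n) → ℝ) × EuclideanSpace ℝ (Fin d)) ℝ)
      (j : Fin (2 * n)), Vtilde n d J j ⇑g = ⇑(VtS n d J j g) :=
    fun g j => funext fun y => (VtS_apply n d J j g y).symm
  have key : ∀ j : Fin (2 * n),
      Radon n d ω (Vtilde n d J j (Vtilde n d J j ⇑f))
        = Vomega n d J ω j (Vomega n d J ω j (Radon n d ω ⇑f)) := by
    intro j
    rw [hVt f j, radon_vtilde n d ω hω J (VtS n d J j f) j, ← hVt f j,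
      radon_vtilde n d ω hω J f j]
  funext x
  have hintj : ∀ j : Fin (2 * n), Integrable (fun z' : (ℝ ∙ ω)ᗮ =>
      Vtilde n d J j (Vtilde n d J j ⇑f)
        (x.1, x.2 • ω + (z' : EuclideanSpace ℝ (Fin d)))) := by
    intro j
    have h := integrable_slice_pair n d ω (VtS n d J j (VtS n d J j f)) x.1 (x.2 • ω)
    refine h.congr (Filter.Eventually.of_forall fun z' => ?_)
    calc (VtS n d J j (VtS n d J j f)) (x.1, x.2 • ω + (z' : EuclideanSpace ℝ (Fin d)))
        = Vtilde n d J j ⇑(VtS n d J j f)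
            (x.1, x.2 • ω + (z' : EuclideanSpace ℝ (Fin d))) := VtS_apply n d J j _ _
      _ = Vtilde n d J j (Vtilde n d J j ⇑f)
            (x.1, x.2 • ω + (z' : EuclideanSpace ℝ (Fin d))) := by rw [← hVt f j]
  have hsub : Radon n d ω (subLaplacian n d J ⇑f) x
      = -∑ j : Fin (2 * n), Radon n d ω (Vtilde n d J j (Vtilde n d J j ⇑f)) x := by
    simp only [Radon, subLaplacian]
    rw [integral_neg, integral_finset_sum _ (fun j _ => hintj j)]
  rw [hsub]
  simp only [subLaplacianOmega]
  congr 1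
  exact Finset.sum_congr rfl fun j _ => congrFun (key j) x
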